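/- Let S be a nonempty finite type and let G be a real S×S matrix whose off-diagonal entries are nonnegative (G a b ≥ 0 whenever a ≠ b). Assume that every entry of the matrix exponential exp(G) is strictly positive, and that there is a constant C such that for every t ≥ 0 every entry of exp(t•G) has absolute value at most C. Then there exists a unique triple (λ, h, γ) such that λ ∈ ℝ with λ ≤ 0, h : S → ℝ and γ : S → ℝ are strictly positive, ∑_{a∈S} γ a = 1, ∑_{a∈S} h a * γ a = 1, G *ᵥ h = λ • h (h is a right eigenvector: for all a, ∑_b G a b * h b = λ * h a), and γ ᵥ* G = λ • γ (γ is a left eigenvector: for all b, ∑_a γ a * G a b = λ * γ b). -/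

import Mathlib

open Matrix BigOperators

section PFAux
open Finset

set_option maxHeartbeats 1000000 in
lemma pf_exists_pos_eigenvector {S : Type*} [Fintype S] [Nonempty S]
    (A : Matrix S S ℝ) (hA : ∀ a b : S, 0 < A a b) :
    ∃ ρ : ℝ, ∃ v : S → ℝ, 0 < ρ ∧ (∀ a, 0 < v a) ∧ A *ᵥ v = ρ • v := by
  classical
  have hne : (Finset.univ : Finset S).Nonempty := univ_nonempty
  have hneP : (Finset.univ : Finset (S × S)).Nonempty := univ_nonempty
  set m : ℝ := Finset.univ.inf' hneP (fun p : S × S => A p.1 p.2) with hm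
  set M : ℝ := Finset.univ.sup' hneP (fun p : S × S => A p.1 p.2) with hM
  have hm_pos : 0 < m := by
    rw [Finset.lt_inf'_iff]; intro p _; exact hA p.1 p.2
  have hm_le : ∀ a b, m ≤ A a b := fun a b => Finset.inf'_le _ (mem_univ (a, b))
  have hM_ge : ∀ a b, A a b ≤ M := fun a b => Finset.le_sup' (fun p : S × S => A p.1 p.2) (mem_univ (a, b))
  have hmM : m ≤ M := le_trans (hm_le (Classical.arbitrary S) (Classical.arbitrary S)) (hM_ge _ _)
  have hM_pos : 0 < M := lt_of_lt_of_le hm_pos hmM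
  set n : ℝ := (Fintype.card S : ℝ) with hn
  have hn_pos : 0 < n := by
    rw [hn]; exact_mod_cast Fintype.card_pos (α := S)
  set δ : ℝ := m / (n * M) with hδ
  have hδ_pos : 0 < δ := div_pos hm_pos (mul_pos hn_pos hM_pos)
  set K : Set (S → ℝ) := {v | (∀ a, δ ≤ v a) ∧ ∑ a, v a = 1} with hK
  -- basic facts about members of K
  have hKpos : ∀ v ∈ K, ∀ a, 0 < v a := fun v hv a => lt_of_lt_of_le hδ_pos (hv.1 a)
  have hKle1 : ∀ v ∈ K, ∀ a, v a ≤ 1 := by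
    intro v hv a
    have : v a ≤ ∑ b, v b := Finset.single_le_sum (fun b _ => le_of_lt (hKpos v hv b)) (mem_univ a)
    simpa [hv.2] using this
  have hAv_pos : ∀ v : S → ℝ, (∀ a, 0 < v a) → ∀ a, 0 < (A *ᵥ v) a := by
    intro v hv a
    apply Finset.sum_pos (fun b _ => mul_pos (hA a b) (hv b)) hne
  -- K is compact
  have hKclosed : IsClosed K := by
    have h1 : IsClosed {v : S → ℝ | ∀ a, δ ≤ v a} := by
      have : {v : S → ℝ | ∀ a, δ ≤ v a} = ⋂ a, {v | δ ≤ v a} := by ext v; simp [Set.mem_iInter]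
      rw [this]
      exact isClosed_iInter fun a => isClosed_le continuous_const (continuous_apply a)
    have h2 : IsClosed {v : S → ℝ | ∑ a, v a = 1} :=
      isClosed_eq (by continuity) continuous_const
    exact h1.inter h2
  have hKbdd : Bornology.IsBounded K := by
    apply isBounded_iff_forall_norm_le.2
    refine ⟨1, fun v hv => ?_⟩
    rw [pi_norm_le_iff_of_nonneg one_pos.le]
    intro a
    rw [Real.norm_eq_abs, abs_le]
    exact ⟨le_trans (by norm_num) (le_of_lt (hKpos v hv a)), hKle1 v hv a⟩
  have hKcompact : IsCompact K := Metric.isCompact_of_isClosed_isBounded hKclosed hKbdd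
  have hKnonempty : K.Nonempty := by
    refine ⟨fun _ => 1 / n, ?_, ?_⟩
    · intro a
      rw [hδ]
      calc m / (n * M) ≤ M / (n * M) := by
            gcongr

        _ = 1 / n := by
            rw [div_eq_div_iff (mul_pos hn_pos hM_pos).ne' hn_pos.ne']; ring
    · rw [Finset.sum_const, nsmul_eq_mul]
      field_simp
      rw [Finset.card_univ, hn]
  have mulVec_apply : ∀ (B : Matrix S S ℝ) (x : S → ℝ) (a : S),
      (B *ᵥ x) a = ∑ b, B a b * x b := fun B x a => by
    simp [Matrix.mulVec, dotProduct]
  set g : (S → ℝ) → ℝ := fun v => Finset.univ.inf' hne (fun a => (A *ᵥ v) a / v a) with hg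
  have hgcont : ContinuousOn g K := by
    apply ContinuousOn.finset_inf'_apply hne
    intro a _
    apply ContinuousOn.div
    · apply Continuous.continuousOn
      have : (fun v : S → ℝ => (A *ᵥ v) a) = fun v => ∑ b, A a b * v b := by
        funext v; exact mulVec_apply A v a
      rw [this]
      exact continuous_finset_sum _ fun b _ => (continuous_const.mul (continuous_apply b))
    · exact (continuous_apply a).continuousOn
    · intro v hv; exact (hKpos v hv a).ne'
  obtain ⟨v, hvK, hvmax⟩ := hKcompact.exists_isMaxOn hKnonempty hgcont
  have hvpos : ∀ a, 0 < v a := hKpos v hvK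
  set ρ : ℝ := g v with hρdef
  have hρ_le : ∀ a, ρ * v a ≤ (A *ᵥ v) a := by
    intro a
    have h1 : ρ ≤ (A *ᵥ v) a / v a := Finset.inf'_le _ (mem_univ a)
    exact (le_div_iff₀ (hvpos a)).1 h1
  have hρ_pos : 0 < ρ := by
    rw [hρdef, hg, Finset.lt_inf'_iff]
    intro a _
    exact div_pos (hAv_pos v hvpos a) (hvpos a)
  refine ⟨ρ, v, hρ_pos, hvpos, ?_⟩
  by_contra hne2
  have hu_nonneg : ∀ a, 0 ≤ (A *ᵥ v) a - ρ * v a := fun a => sub_nonneg.2 (hρ_le a)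
  have hu_ne : ∃ b, 0 < (A *ᵥ v) b - ρ * v b := by
    by_contra h
    push_neg at h
    apply hne2
    funext a
    have h1 := le_antisymm (h a) (hu_nonneg a)
    have : (A *ᵥ v) a = ρ * v a := by linarith
    simpa [Pi.smul_apply, smul_eq_mul] using this
  obtain ⟨b₀, hb₀⟩ := hu_ne
  set u : S → ℝ := fun a => (A *ᵥ v) a - ρ * v a with hu
  have hAu_pos : ∀ a, 0 < (A *ᵥ u) a := by
    intro a
    rw [mulVec_apply]
    have hle : A a b₀ * u b₀ ≤ ∑ b, A a b * u b :=
      Finset.single_le_sum (f := fun b => A a b * u b)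
        (fun b _ => mul_nonneg (hA a b).le (hu_nonneg b)) (mem_univ b₀)
    exact lt_of_lt_of_le (mul_pos (hA a b₀) hb₀) hle
  have hu_eq : u = A *ᵥ v - ρ • v := by
    funext a; simp [hu, Pi.smul_apply, smul_eq_mul, Pi.sub_apply]
  have hAu : A *ᵥ u = A *ᵥ (A *ᵥ v) - ρ • (A *ᵥ v) := by
    rw [hu_eq, Matrix.mulVec_sub, Matrix.mulVec_smul]
  have hkey : ∀ a, ρ * (A *ᵥ v) a < (A *ᵥ (A *ᵥ v)) a := by
    intro a
    have := hAu_pos a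
    rw [hAu] at this
    simp only [Pi.sub_apply, Pi.smul_apply, smul_eq_mul] at this
    linarith
  set t : ℝ := ∑ a, (A *ᵥ v) a with ht
  have ht_pos : 0 < t := Finset.sum_pos (fun a _ => hAv_pos v hvpos a) hne
  set w : S → ℝ := t⁻¹ • (A *ᵥ v) with hw
  have hw_apply : ∀ a, w a = (A *ᵥ v) a / t := by
    intro a; simp [hw, Pi.smul_apply, smul_eq_mul, div_eq_inv_mul]
  have hwK : w ∈ K := by
    constructor
    · intro a
      rw [hw_apply]
      have h1 : m ≤ (A *ᵥ v) a := by
        rw [mulVec_apply]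
        calc m = m * ∑ b, v b := by rw [hvK.2]; ring
          _ = ∑ b, m * v b := by rw [Finset.mul_sum]
          _ ≤ ∑ b, A a b * v b :=
              Finset.sum_le_sum fun b _ => mul_le_mul_of_nonneg_right (hm_le a b) (hvpos b).le
      have h2 : t ≤ n * M := by
        have : ∀ a : S, (A *ᵥ v) a ≤ M := by
          intro a
          rw [mulVec_apply]
          calc ∑ b, A a b * v b ≤ ∑ b, M * v b :=
                Finset.sum_le_sum fun b _ => mul_le_mul_of_nonneg_right (hM_ge a b) (hvpos b).le
            _ = M * ∑ b, v b := by rw [Finset.mul_sum]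
            _ = M := by rw [hvK.2]; ring
        calc t ≤ ∑ _a : S, M := Finset.sum_le_sum fun a _ => this a
          _ = n * M := by rw [Finset.sum_const, nsmul_eq_mul, Finset.card_univ, hn]
      calc δ = m / (n * M) := hδ
        _ ≤ m / t := by gcongr
        _ ≤ (A *ᵥ v) a / t := by gcongr
    · have h3 : ∑ a, w a = t / t := by
        rw [ht, Finset.sum_div]
        exact Finset.sum_congr rfl fun a _ => hw_apply a
      rw [h3, div_self ht_pos.ne']
  have hcontr : ρ < g w := by
    rw [hg, Finset.lt_inf'_iff]
    intro a _
    rw [lt_div_iff₀ (hKpos w hwK a)]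
    have hAw : A *ᵥ w = t⁻¹ • (A *ᵥ (A *ᵥ v)) := by rw [hw, Matrix.mulVec_smul]
    rw [hAw, hw_apply]
    simp only [Pi.smul_apply, smul_eq_mul]
    rw [div_eq_inv_mul]
    have := hkey a
    have hti : 0 < t⁻¹ := inv_pos.2 ht_pos
    calc ρ * (t⁻¹ * (A *ᵥ v) a) = t⁻¹ * (ρ * (A *ᵥ v) a) := by ring
      _ < t⁻¹ * (A *ᵥ (A *ᵥ v)) a := by
          exact mul_lt_mul_of_pos_left (hkey a) hti
  exact absurd (hvmax hwK) (not_le.2 hcontr)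

lemma pf_eigenspace_dim_one {S : Type*} [Fintype S] [Nonempty S]
    (A : Matrix S S ℝ) (hA : ∀ a b : S, 0 < A a b) {ρ : ℝ} {v w : S → ℝ}
    (hv : ∀ a, 0 < v a) (hAv : A *ᵥ v = ρ • v) (hAw : A *ᵥ w = ρ • w) :
    ∃ c : ℝ, w = c • v := by
  classical
  have hne : (Finset.univ : Finset S).Nonempty := univ_nonempty
  have mulVec_apply : ∀ (B : Matrix S S ℝ) (x : S → ℝ) (a : S),
      (B *ᵥ x) a = ∑ b, B a b * x b := fun B x a => by
    simp [Matrix.mulVec, dotProduct]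
  have hρ_pos : 0 < ρ := by
    have a0 := Classical.arbitrary S
    have h1 : 0 < (A *ᵥ v) a0 :=
      Finset.sum_pos (fun b _ => mul_pos (hA a0 b) (hv b)) hne
    rw [hAv] at h1
    simp only [Pi.smul_apply, smul_eq_mul] at h1
    nlinarith [hv a0]
  set c : ℝ := Finset.univ.inf' hne (fun a => w a / v a) with hc
  refine ⟨c, ?_⟩
  set u : S → ℝ := w - c • v with hu
  have hu_nonneg : ∀ a, 0 ≤ u a := by
    intro a
    have h1 : c ≤ w a / v a := Finset.inf'_le _ (mem_univ a)
    have h2 := (le_div_iff₀ (hv a)).1 h1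
    simp [hu, Pi.sub_apply, Pi.smul_apply, smul_eq_mul]
    linarith
  obtain ⟨a₀, _, ha₀⟩ := Finset.exists_mem_eq_inf' hne (fun a => w a / v a)
  have hu_zero : u a₀ = 0 := by
    have : c * v a₀ = w a₀ := by
      rw [show c = w a₀ / v a₀ from hc.trans ha₀]
      field_simp
      rw [mul_div_assoc, div_self (hv a₀).ne', mul_one]
    simp [hu, Pi.sub_apply, Pi.smul_apply, smul_eq_mul]
    linarith
  have hAu : A *ᵥ u = ρ • u := by
    rw [hu, Matrix.mulVec_sub, Matrix.mulVec_smul, hAv, hAw, smul_sub, smul_comm]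
  by_contra hne2
  have : ∃ b, 0 < u b := by
    by_contra h
    push_neg at h
    apply hne2
    have h0 : u = 0 := funext fun a => le_antisymm (h a) (hu_nonneg a)
    rw [hu] at h0
    exact sub_eq_zero.1 h0
  obtain ⟨b₀, hb₀⟩ := this
  have h1 : 0 < (A *ᵥ u) a₀ := by
    rw [mulVec_apply]
    have hle : A a₀ b₀ * u b₀ ≤ ∑ b, A a₀ b * u b :=
      Finset.single_le_sum (f := fun b => A a₀ b * u b)
        (fun b _ => mul_nonneg (hA a₀ b).le (hu_nonneg b)) (mem_univ b₀)
    exact lt_of_lt_of_le (mul_pos (hA a₀ b₀) hb₀) hle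
  rw [hAu] at h1
  simp only [Pi.smul_apply, smul_eq_mul, hu_zero, mul_zero] at h1
  exact lt_irrefl 0 h1

lemma pf_exp_mulVec_eigen {S : Type*} [Fintype S] [DecidableEq S]
    (B : Matrix S S ℝ) {μ : ℝ} {v : S → ℝ} (h : B *ᵥ v = μ • v) :
    NormedSpace.exp B *ᵥ v = Real.exp μ • v := by
  classical
  letI : SeminormedRing (Matrix S S ℝ) := Matrix.linftyOpSemiNormedRing
  letI : NormedRing (Matrix S S ℝ) := Matrix.linftyOpNormedRing
  letI : NormedAlgebra ℝ (Matrix S S ℝ) := Matrix.linftyOpNormedAlgebra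
  have hpow : ∀ k : ℕ, B ^ k *ᵥ v = μ ^ k • v := by
    intro k
    induction k with
    | zero => simp
    | succ k ih =>
        rw [pow_succ', pow_succ', ← Matrix.mulVec_mulVec, ih, Matrix.mulVec_smul, h,
          smul_smul, mul_comm]
  let ψ : Matrix S S ℝ →ₗ[ℝ] (S → ℝ) :=
    { toFun := fun M => M *ᵥ v
      map_add' := fun M N => Matrix.add_mulVec M N v
      map_smul' := fun c M => Matrix.smul_mulVec c M v }
  have hψc : Continuous ψ := ψ.continuous_of_finiteDimensional
  have hsum : Summable (fun k : ℕ => ((Nat.factorial k : ℝ))⁻¹ • B ^ k) :=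
    NormedSpace.expSeries_summable' (𝕂 := ℝ) B
  have h1 : NormedSpace.exp B *ᵥ v = ∑' k : ℕ, ψ (((Nat.factorial k : ℝ))⁻¹ • B ^ k) := by
    rw [NormedSpace.exp_eq_tsum ℝ]
    exact (hsum.hasSum.map ψ.toAddMonoidHom hψc).tsum_eq.symm
  rw [h1]
  have h2 : ∀ k : ℕ, ψ (((Nat.factorial k : ℝ))⁻¹ • B ^ k) = (μ ^ k / (Nat.factorial k : ℝ)) • v := by
    intro k
    rw [LinearMap.map_smul]
    show ((Nat.factorial k : ℝ))⁻¹ • (B ^ k *ᵥ v) = (μ ^ k / (Nat.factorial k : ℝ)) • v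
    rw [hpow, smul_smul, div_eq_inv_mul]
  simp_rw [h2]
  rw [(Real.summable_pow_div_factorial μ).tsum_smul_const]
  congr 1
  rw [Real.exp_eq_exp_ℝ, NormedSpace.exp_eq_tsum_div]


end PFAux

/-- Perron–Frobenius for the generator of a bounded-size structured population process
(Proposition 4.1 of the paper): a Metzler matrix `G` on a nonempty finite type `S` whose
exponential has strictly positive entries and whose semigroup `exp (t • G)` is uniformly
bounded admits a unique normalized Perron triple `(lam, h, gam)` with `lam ≤ 0`. -/
theorem spine_perron_frobenius
    {S : Type*} [Fintype S] [Nonempty S] [DecidableEq S]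
    (G : Matrix S S ℝ)
    (hMetzler : ∀ a b : S, a ≠ b → 0 ≤ G a b)
    (hpos : ∀ a b : S, 0 < NormedSpace.exp G a b)
    (C : ℝ)
    (hbound : ∀ t : ℝ, 0 ≤ t → ∀ a b : S, |NormedSpace.exp (t • G) a b| ≤ C) :
    ∃! p : ℝ × (S → ℝ) × (S → ℝ),
      p.1 ≤ 0 ∧
      (∀ a, 0 < p.2.1 a) ∧
      (∀ a, 0 < p.2.2 a) ∧
      (∑ a, p.2.2 a = 1) ∧
      (∑ a, p.2.1 a * p.2.2 a = 1) ∧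
      G *ᵥ p.2.1 = p.1 • p.2.1 ∧
      p.2.2 ᵥ* G = p.1 • p.2.2 := by
  classical
  have hne : (Finset.univ : Finset S).Nonempty := Finset.univ_nonempty
  set A : Matrix S S ℝ := NormedSpace.exp G with hAdef
  have hcomm : G * A = A * G := (Commute.refl G).exp_right
  obtain ⟨ρ, v, hρ, hv, hAv⟩ := pf_exists_pos_eigenvector A hpos
  -- G *ᵥ v is in the ρ-eigenspace of A
  have hGvE : A *ᵥ (G *ᵥ v) = ρ • (G *ᵥ v) := by
    calc A *ᵥ (G *ᵥ v) = (A * G) *ᵥ v := Matrix.mulVec_mulVec v A G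
      _ = (G * A) *ᵥ v := by rw [hcomm]
      _ = G *ᵥ (A *ᵥ v) := (Matrix.mulVec_mulVec v G A).symm
      _ = G *ᵥ (ρ • v) := by rw [hAv]
      _ = ρ • (G *ᵥ v) := Matrix.mulVec_smul G ρ v
  obtain ⟨lam, hlam⟩ := pf_eigenspace_dim_one A hpos hv hAv hGvE
  have a₀ : S := Classical.arbitrary S
  -- exp relation
  have hρ_eq : ρ = Real.exp lam := by
    have h1 := pf_exp_mulVec_eigen G hlam
    rw [← hAdef, hAv] at h1
    have h2 := congrFun h1 a₀
    simp only [Pi.smul_apply, smul_eq_mul] at h2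
    exact mul_right_cancel₀ (hv a₀).ne' h2
  -- lam ≤ 0
  set sv : ℝ := ∑ b, v b with hsv
  have hsv_pos : 0 < sv := Finset.sum_pos (fun b _ => hv b) hne
  have hlam_le : lam ≤ 0 := by
    by_contra hlt
    push_neg at hlt
    set D : ℝ := C * sv / v a₀ with hD
    have hDbound : ∀ t : ℝ, 0 ≤ t → Real.exp (t * lam) ≤ D := by
      intro t ht
      have h1 : (t • G) *ᵥ v = (t * lam) • v := by
        rw [Matrix.smul_mulVec, hlam, smul_smul]
      have h2 := pf_exp_mulVec_eigen (t • G) h1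
      have h3 := congrFun h2 a₀
      simp only [Pi.smul_apply, smul_eq_mul] at h3
      have h4 : (NormedSpace.exp (t • G) *ᵥ v) a₀ ≤ C * sv := by
        have : (NormedSpace.exp (t • G) *ᵥ v) a₀
            = ∑ b, NormedSpace.exp (t • G) a₀ b * v b := by
          simp [Matrix.mulVec, dotProduct]
        rw [this, hsv, Finset.mul_sum]
        refine Finset.sum_le_sum fun b _ => ?_
        exact mul_le_mul_of_nonneg_right
          (le_trans (le_abs_self _) (hbound t ht a₀ b)) (hv b).le
      rw [h3] at h4
      rw [hD, le_div_iff₀ (hv a₀)]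
      exact h4
    have hD1 : (1 : ℝ) ≤ D := by simpa using hDbound 0 le_rfl
    have hD_pos : 0 < D := lt_of_lt_of_le one_pos hD1
    set t0 : ℝ := (Real.log D + 1) / lam with ht0def
    have hlog : 0 ≤ Real.log D := Real.log_nonneg hD1
    have ht0 : 0 ≤ t0 := div_nonneg (by linarith) hlt.le
    have hfin := hDbound t0 ht0
    have ht0lam : t0 * lam = Real.log D + 1 := by
      rw [ht0def]; field_simp
    rw [ht0lam, Real.exp_add, Real.exp_log hD_pos] at hfin
    nlinarith [Real.exp_one_gt_d9]
  -- left eigenvector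
  have hApos_T : ∀ a b : S, 0 < Aᵀ a b := fun a b => hpos b a
  obtain ⟨ρ₂, u, hρ₂, hu, hATu⟩ := pf_exists_pos_eigenvector Aᵀ hApos_T
  have hdot_pos : ∀ x y : S → ℝ, (∀ a, 0 < x a) → (∀ a, 0 < y a) → 0 < x ⬝ᵥ y := by
    intro x y hx hy
    exact Finset.sum_pos (fun a _ => mul_pos (hx a) (hy a)) hne
  have hswap : ∀ (B : Matrix S S ℝ) (x y : S → ℝ), (Bᵀ *ᵥ x) ⬝ᵥ y = x ⬝ᵥ (B *ᵥ y) := by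
    intro B x y
    rw [Matrix.mulVec_transpose, ← Matrix.dotProduct_mulVec]
  have hρ₂ρ : ρ₂ = ρ := by
    have h1 : (Aᵀ *ᵥ u) ⬝ᵥ v = u ⬝ᵥ (A *ᵥ v) := hswap A u v
    rw [hATu, hAv, smul_dotProduct, dotProduct_smul,
      smul_eq_mul, smul_eq_mul] at h1
    exact mul_right_cancel₀ (hdot_pos u v hu hv).ne' h1
  rw [hρ₂ρ] at hATu
  have hGTuE : Aᵀ *ᵥ (Gᵀ *ᵥ u) = ρ • (Gᵀ *ᵥ u) := by
    have hcommT : Aᵀ * Gᵀ = Gᵀ * Aᵀ := by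
      rw [← Matrix.transpose_mul, ← Matrix.transpose_mul, hcomm]
    calc Aᵀ *ᵥ (Gᵀ *ᵥ u) = (Aᵀ * Gᵀ) *ᵥ u := Matrix.mulVec_mulVec u Aᵀ Gᵀ
      _ = (Gᵀ * Aᵀ) *ᵥ u := by rw [hcommT]
      _ = Gᵀ *ᵥ (Aᵀ *ᵥ u) := (Matrix.mulVec_mulVec u Gᵀ Aᵀ).symm
      _ = Gᵀ *ᵥ (ρ • u) := by rw [hATu]
      _ = ρ • (Gᵀ *ᵥ u) := Matrix.mulVec_smul Gᵀ ρ u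
  obtain ⟨mu, hmu⟩ := pf_eigenspace_dim_one Aᵀ hApos_T hu hATu hGTuE
  have hmu_lam : mu = lam := by
    have h1 : (Gᵀ *ᵥ u) ⬝ᵥ v = u ⬝ᵥ (G *ᵥ v) := hswap G u v
    rw [hmu, hlam, smul_dotProduct, dotProduct_smul,
      smul_eq_mul, smul_eq_mul] at h1
    exact mul_right_cancel₀ (hdot_pos u v hu hv).ne' h1
  rw [hmu_lam] at hmu
  -- normalization
  set su : ℝ := ∑ a, u a with hsu
  have hsu_pos : 0 < su := Finset.sum_pos (fun a _ => hu a) hne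
  set γ : S → ℝ := su⁻¹ • u with hγ
  have hγ_pos : ∀ a, 0 < γ a := fun a => mul_pos (inv_pos.2 hsu_pos) (hu a)
  have hγ_sum : ∑ a, γ a = 1 := by
    rw [hγ]
    simp only [Pi.smul_apply, smul_eq_mul, ← Finset.mul_sum, ← hsu]
    exact inv_mul_cancel₀ hsu_pos.ne'
  have hATγ : Aᵀ *ᵥ γ = ρ • γ := by
    rw [hγ, Matrix.mulVec_smul, hATu, smul_comm]
  have hGTγ : Gᵀ *ᵥ γ = lam • γ := by
    rw [hγ, Matrix.mulVec_smul, hmu, smul_comm]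
  set c : ℝ := ∑ a, v a * γ a with hc
  have hc_pos : 0 < c := Finset.sum_pos (fun a _ => mul_pos (hv a) (hγ_pos a)) hne
  set h : S → ℝ := c⁻¹ • v with hh
  have hh_pos : ∀ a, 0 < h a := fun a => mul_pos (inv_pos.2 hc_pos) (hv a)
  have hAh : A *ᵥ h = ρ • h := by
    rw [hh, Matrix.mulVec_smul, hAv, smul_comm]
  have hGh : G *ᵥ h = lam • h := by
    rw [hh, Matrix.mulVec_smul, hlam, smul_comm]
  have hhγ_sum : ∑ a, h a * γ a = 1 := by
    rw [hh]
    simp only [Pi.smul_apply, smul_eq_mul, mul_assoc, ← Finset.mul_sum, ← hc]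
    exact inv_mul_cancel₀ hc_pos.ne'
  have hγG : γ ᵥ* G = lam • γ := by
    rw [← Matrix.mulVec_transpose, hGTγ]
  refine ⟨(lam, h, γ), ⟨hlam_le, hh_pos, hγ_pos, hγ_sum, hhγ_sum, hGh, hγG⟩, ?_⟩
  rintro ⟨lam', h', γ'⟩ ⟨_, hq2, hq3, hq4, hq5, hq6, hq7⟩
  simp only at hq2 hq3 hq4 hq5 hq6 hq7
  -- lam' = lam
  have hAh' : A *ᵥ h' = Real.exp lam' • h' := pf_exp_mulVec_eigen G hq6
  have hexp_eq : Real.exp lam' = ρ := by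
    have h1 : (Aᵀ *ᵥ u) ⬝ᵥ h' = u ⬝ᵥ (A *ᵥ h') := hswap A u h'
    rw [hATu, hAh', smul_dotProduct, dotProduct_smul,
      smul_eq_mul, smul_eq_mul] at h1
    exact (mul_right_cancel₀ (hdot_pos u h' hu hq2).ne' h1).symm
  have hlam' : lam' = lam := by
    rw [← Real.exp_eq_exp, hexp_eq, hρ_eq]
  rw [hexp_eq] at hAh'
  obtain ⟨c₁, hc₁⟩ := pf_eigenspace_dim_one A hpos hh_pos hAh hAh'
  -- γ'
  have hGTγ' : Gᵀ *ᵥ γ' = lam • γ' := by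
    rw [Matrix.mulVec_transpose, hq7, hlam']
  have hATγ' : Aᵀ *ᵥ γ' = ρ • γ' := by
    have h1 := pf_exp_mulVec_eigen Gᵀ hGTγ'
    rw [Matrix.exp_transpose, ← hAdef, ← hρ_eq] at h1
    exact h1
  obtain ⟨c₂, hc₂⟩ := pf_eigenspace_dim_one Aᵀ hApos_T hγ_pos hATγ hATγ'
  have hc₂1 : c₂ = 1 := by
    have h1 : ∑ a, γ' a = c₂ := by
      rw [hc₂]
      simp only [Pi.smul_apply, smul_eq_mul, ← Finset.mul_sum, hγ_sum, mul_one]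
    rw [← h1, hq4]
  rw [hc₂1, one_smul] at hc₂
  have hc₁1 : c₁ = 1 := by
    have h1 : ∑ a, h' a * γ' a = c₁ := by
      rw [hc₁, hc₂]
      simp only [Pi.smul_apply, smul_eq_mul, mul_assoc, ← Finset.mul_sum, hhγ_sum, mul_one]
    rw [← h1, hq5]
  rw [hc₁1, one_smul] at hc₁
  exact Prod.ext hlam' (Prod.ext hc₁ hc₂)
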